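/- Let distributions Q_1,...,Q_t on ℝ have continuous CDFs F_1,...,F_t, fix k ∈ [t], and let the data consist of independent samples, with B_j i.i.d. draws from Q_j for each j. Let q̂_{t,k} be the left (1−α)-quantile of the empirical CDF of the pooled samples from periods t−k+1,...,t (pooled size B_{t,k}). Then for any δ ∈ (0,1), with probability at least 1 − δ: |F_t(q̂_{t,k}) − (1−α)| ≤ φ(t,k) + (5/4)√(2α(1−α)log(2/δ)/B_{t,k}) + 4·log(2/δ)/B_{t,k}, where φ(t,k) = max_{t−k+1 ≤ j ≤ t} ‖F_j − F_t‖_∞. -/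

import Mathlib

open MeasureTheory ProbabilityTheory Real

private lemma pos_aux (f f' : ℝ → ℝ) (hf : ∀ x, HasDerivAt f (f' x) x) (h0 : f 0 = 0)
    (hf' : ∀ x, 0 ≤ x → 0 ≤ f' x) : ∀ x, 0 ≤ x → 0 ≤ f x := by
  intro x hx
  have hm : MonotoneOn f (Set.Ici 0) := by
    apply monotoneOn_of_deriv_nonneg (convex_Ici 0)
      (fun y _ => (hf y).continuousAt.continuousWithinAt)
      (fun y _ => ((hf y).differentiableAt).differentiableWithinAt)
    intro y hy
    rw [interior_Ici] at hy
    rw [(hf y).deriv]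
    exact hf' y hy.le
  calc (0:ℝ) = f 0 := h0.symm
  _ ≤ f x := hm Set.self_mem_Ici hx hx

private lemma pos_aux_neg (f f' : ℝ → ℝ) (hf : ∀ x, HasDerivAt f (f' x) x) (h0 : f 0 = 0)
    (hf' : ∀ x, x ≤ 0 → f' x ≤ 0) : ∀ x, x ≤ 0 → 0 ≤ f x := by
  intro x hx
  have hm : AntitoneOn f (Set.Iic 0) := by
    apply antitoneOn_of_deriv_nonpos (convex_Iic 0)
      (fun y _ => (hf y).continuousAt.continuousWithinAt)
      (fun y _ => ((hf y).differentiableAt).differentiableWithinAt)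
    intro y hy
    rw [interior_Iic] at hy
    rw [(hf y).deriv]
    exact hf' y hy.le
  calc (0:ℝ) = f 0 := h0.symm
  _ ≤ f x := hm hx Set.self_mem_Iic hx


private lemma g_nonneg {l : ℝ} (hl : 0 ≤ l) : 0 ≤ exp l - 1 - l := by
  nlinarith [add_one_le_exp l]

private lemma quad_nonpos {x : ℝ} (hx : x ≤ 0) : exp x ≤ 1 + x + x^2/2 := by
  have := pos_aux_neg (fun y => 1 + y + y^2/2 - exp y) (fun y => 1 + y - exp y)
    (fun y => by
      have h1 : HasDerivAt (fun y : ℝ => 1 + y + y^2/2 - exp y)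
          (0 + 1 + (2:ℕ) * y^(2-1)/2 - exp y) y := by
        exact ((((hasDerivAt_const y (1:ℝ)).add (hasDerivAt_id' y)).add
          (((hasDerivAt_pow 2 y)).div_const 2)).sub (Real.hasDerivAt_exp y))
      convert h1 using 1; push_cast; ring) (by norm_num)
    (fun y hy => by nlinarith [add_one_le_exp y]) x hx
  linarith

private lemma half_sq_le_g {l : ℝ} (hl : 0 ≤ l) : l^2/2 ≤ exp l - 1 - l := by
  have := pos_aux (fun y => exp y - 1 - y - y^2/2) (fun y => exp y - 1 - y)
    (fun y => by
      have h1 : HasDerivAt (fun y : ℝ => exp y - 1 - y - y^2/2)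
          (exp y - 0 - 1 - (2:ℕ) * y^(2-1)/2) y := by
        exact (((Real.hasDerivAt_exp y).sub (hasDerivAt_const y 1)).sub (hasDerivAt_id' y)).sub
          ((hasDerivAt_pow 2 y).div_const 2)
      convert h1 using 1; push_cast; ring) (by norm_num)
    (fun y hy => by nlinarith [add_one_le_exp y]) l hl
  linarith

private lemma convex_exp_bound {y l : ℝ} (h0 : 0 ≤ y) (h1 : y ≤ 1) :
    exp (l * y) ≤ 1 + y * (exp l - 1) := by
  have := convexOn_exp.2 (Set.mem_univ (0:ℝ)) (Set.mem_univ l) (by linarith : (0:ℝ) ≤ 1 - y) h0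
    (by ring)
  simp only [smul_eq_mul, mul_zero, zero_add, exp_zero] at this
  calc exp (l * y) = exp ((1-y) * 0 + y * l) := by ring_nf
  _ ≤ (1-y) * 1 + y * exp l := by simpa [exp_zero] using this
  _ = 1 + y * (exp l - 1) := by ring

private lemma pointwise_bennett {y l : ℝ} (hy : y ≤ 1) (hl : 0 ≤ l) :
    exp (l * y) ≤ 1 + l * y + y^2 * (exp l - 1 - l) := by
  rcases le_or_gt 0 y with h0 | h0
  · have := pos_aux (fun s => 1 + s * y + y^2 * (exp s - 1 - s) - exp (s * y))
      (fun s => y + y^2 * (exp s - 1) - y * exp (s * y))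
      (fun s => by
        have h1 : HasDerivAt (fun s : ℝ => 1 + s * y + y^2 * (exp s - 1 - s) - exp (s * y))
            (0 + 1 * y + y^2 * ((exp s - 0) - 1) - exp (s * y) * (1 * y)) s := by
          refine HasDerivAt.sub ?_ ?_
          · exact ((hasDerivAt_const s (1:ℝ)).add ((hasDerivAt_id' s).mul_const y)).add
              ((((Real.hasDerivAt_exp s).sub (hasDerivAt_const s 1)).sub
                (hasDerivAt_id' s)).const_mul (y^2))
          · exact (Real.hasDerivAt_exp (s*y)).comp s ((hasDerivAt_id' s).mul_const y)
        convert h1 using 1; ring) (by norm_num)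
      (fun s hs => by
        have hc := convex_exp_bound h0 hy (l := s)
        nlinarith [sq_nonneg y, exp_pos s]) l hl
    linarith
  · have h2 : l * y ≤ 0 := mul_nonpos_of_nonneg_of_nonpos hl h0.le
    have h3 := quad_nonpos h2
    have h4 := half_sq_le_g hl
    nlinarith [sq_nonneg (l*y), sq_nonneg y, sq_nonneg l]

private lemma bern_mgf {p l : ℝ} (hp0 : 0 ≤ p) (hp1 : p ≤ 1) (hl : 0 ≤ l) :
    (1 - p) * exp (l * (-p)) + p * exp (l * (1 - p)) ≤
      exp (p * (1 - p) * (exp l - 1 - l)) := by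
  have ha := pointwise_bennett (y := -p) (by linarith) hl
  have hb := pointwise_bennett (y := 1 - p) (by linarith) hl
  have key : (1 - p) * exp (l * (-p)) + p * exp (l * (1 - p)) ≤
      1 + p * (1 - p) * (exp l - 1 - l) := by nlinarith [g_nonneg hl]
  refine key.trans ?_
  have := add_one_le_exp (p * (1 - p) * (exp l - 1 - l))
  linarith

private lemma bernstein_g {l : ℝ} (hl : 0 ≤ l) : (1 - l/3) * (exp l - 1 - l) ≤ l^2/2 := by
  have h2 := pos_aux (fun s => 1/3 + (s/3 - 1/3) * exp s) (fun s => (s/3) * exp s)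
    (fun s => by
      have h1 : HasDerivAt (fun s : ℝ => 1/3 + (s/3 - 1/3) * exp s)
          (0 + ((1/3 - 0) * exp s + (s/3 - 1/3) * exp s)) s := by
        exact (hasDerivAt_const s (1/3:ℝ)).add
          ((((hasDerivAt_id' s).div_const 3).sub (hasDerivAt_const s (1/3))).mul
            (Real.hasDerivAt_exp s))
      convert h1 using 1; ring) (by norm_num)
    (fun s hs => by positivity)
  have h1 := pos_aux (fun s => s + (1/3) * (exp s - 1 - s) - (1 - s/3) * (exp s - 1))
    (fun s => 1/3 + (s/3 - 1/3) * exp s)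
    (fun s => by
      have h1 : HasDerivAt (fun s : ℝ => s + (1/3) * (exp s - 1 - s) - (1 - s/3) * (exp s - 1))
          (1 + (1/3) * (exp s - 0 - 1) - ((0 - 1/3) * (exp s - 1) + (1 - s/3) * (exp s - 0))) s := by
        refine HasDerivAt.sub ?_ ?_
        · exact (hasDerivAt_id' s).add ((((Real.hasDerivAt_exp s).sub
            (hasDerivAt_const s 1)).sub (hasDerivAt_id' s)).const_mul (1/3))
        · exact (((hasDerivAt_const s (1:ℝ)).sub ((hasDerivAt_id' s).div_const 3)).mul
            ((Real.hasDerivAt_exp s).sub (hasDerivAt_const s 1)))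
      convert h1 using 1; ring) (by norm_num)
    (fun s hs => by have := h2 s hs; linarith)
  have h0 := pos_aux (fun s => s^2/2 - (1 - s/3) * (exp s - 1 - s))
    (fun s => s + (1/3) * (exp s - 1 - s) - (1 - s/3) * (exp s - 1))
    (fun s => by
      have h1 : HasDerivAt (fun s : ℝ => s^2/2 - (1 - s/3) * (exp s - 1 - s))
          ((2:ℕ) * s^(2-1)/2 - ((0 - 1/3) * (exp s - 1 - s) + (1 - s/3) * (exp s - 0 - 1))) s := by
        refine HasDerivAt.sub ((hasDerivAt_pow 2 s).div_const 2) ?_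
        exact ((hasDerivAt_const s (1:ℝ)).sub ((hasDerivAt_id' s).div_const 3)).mul
          (((Real.hasDerivAt_exp s).sub (hasDerivAt_const s 1)).sub (hasDerivAt_id' s))
      convert h1 using 1; push_cast; ring) (by norm_num)
    (fun s hs => by have := h1 s hs; linarith) l hl
  linarith


private lemma bern_mgf' {p l : ℝ} (hp0 : 0 ≤ p) (hp1 : p ≤ 1) (hl : 0 ≤ l) :
    1 + p * (exp l - 1) ≤ exp (l * p + p * (1 - p) * (exp l - 1 - l)) := by
  have h := bern_mgf hp0 hp1 hl
  have e1 : exp (l * p) * exp (l * (-p)) = 1 := by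
    rw [← exp_add, show l * p + l * (-p) = 0 by ring, exp_zero]
  have e2 : exp (l * p) * exp (l * (1 - p)) = exp l := by
    rw [← exp_add, show l * p + l * (1 - p) = l by ring]
  have he : exp (l * p) * ((1 - p) * exp (l * (-p)) + p * exp (l * (1 - p)))
      = 1 + p * (exp l - 1) := by
    calc exp (l * p) * ((1 - p) * exp (l * (-p)) + p * exp (l * (1 - p)))
        = (1 - p) * (exp (l * p) * exp (l * (-p))) + p * (exp (l * p) * exp (l * (1 - p))) := by
          ring
    _ = 1 + p * (exp l - 1) := by rw [e1, e2]; ring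
  rw [← he, exp_add]
  exact mul_le_mul_of_nonneg_left h (exp_pos _).le

private lemma chernoff_bennett {Ω ι : Type*} [MeasurableSpace Ω] (μ : Measure Ω)
    [IsProbabilityMeasure μ]
    (A : ι → Set Ω) (hA : ∀ i, MeasurableSet (A i))
    (hind : iIndepFun
      (fun i => (A i).indicator (fun _ => (1:ℝ))) μ)
    (W : Finset ι) (p : ι → ℝ) (hp : ∀ i, p i = (μ (A i)).toReal)
    (V' s : ℝ) (hV : ∑ i ∈ W, p i * (1 - p i) ≤ V') (hV' : 0 < V') (hs : 0 < s) :
    (μ {ω | (∑ i ∈ W, p i) + s ≤ ∑ i ∈ W, (A i).indicator (fun _ => (1:ℝ)) ω}).toReal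
      ≤ exp (-(s^2 / (2 * (V' + s/3)))) := by
  classical
  set l : ℝ := s / (V' + s/3) with hl_def
  have hVs : 0 < V' + s/3 := by linarith
  have hl0 : 0 < l := div_pos hs hVs
  have hls : (V' + s/3) * l = s := by rw [hl_def]; field_simp
  have hl3 : l < 3 := by
    rw [hl_def, div_lt_iff₀ hVs]; linarith
  have hV'eq : (1 - l/3) * (V' + s/3) = V' := by linear_combination (-1/3 : ℝ) * hls
  clear_value l
  clear hl_def
  set X : ι → Ω → ℝ := fun i => (A i).indicator (fun _ => (1:ℝ)) with hX
  have hXmeas : ∀ i, Measurable (X i) := fun i => (measurable_const.indicator (hA i))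
  have hX01 : ∀ i ω, X i ω = 0 ∨ X i ω = 1 := by
    intro i ω; by_cases h : ω ∈ A i <;> simp [hX, Set.indicator_apply, h]
  have hp01 : ∀ i, 0 ≤ p i ∧ p i ≤ 1 := by
    intro i; rw [hp i]
    exact ⟨ENNReal.toReal_nonneg,
      by simpa using ENNReal.toReal_mono ENNReal.one_ne_top (prob_le_one (μ := μ) (s := A i))⟩
  set S : Ω → ℝ := fun ω => ∑ i ∈ W, X i ω with hS
  have hSmeas : Measurable S := Finset.measurable_sum W (fun i _ => hXmeas i)
  have hSbound : ∀ ω, S ω ≤ W.card := by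
    intro ω
    calc S ω ≤ ∑ i ∈ W, 1 := Finset.sum_le_sum (fun i _ => by rcases hX01 i ω with h|h <;> simp [h])
    _ = W.card := by simp
  have hint : Integrable (fun ω => exp (l * S ω)) μ := by
    refine Integrable.mono' (integrable_const (exp (l * W.card)))
      ((hSmeas.const_mul l).exp.aestronglyMeasurable) (Filter.Eventually.of_forall fun ω => ?_)
    rw [Real.norm_eq_abs, abs_of_pos (exp_pos _)]
    exact exp_le_exp.2 (mul_le_mul_of_nonneg_left (hSbound ω) hl0.le)
  have hcher := measure_ge_le_exp_mul_mgf (μ := μ) (X := S) ((∑ i ∈ W, p i) + s) hl0.le hint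
  have hmgfsum : mgf S μ l = ∏ i ∈ W, mgf (X i) μ l := by
    have := hind.mgf_sum (t := l) hXmeas W
    rw [← this]
    congr 1
    funext ω
    simp [hS, Finset.sum_apply]
  have hmgf_i : ∀ i, mgf (X i) μ l = 1 + p i * (exp l - 1) := by
    intro i
    have hfe : (fun ω => exp (l * X i ω)) =
        fun ω => (A i).indicator (fun _ => exp l - 1) ω + 1 := by
      funext ω
      by_cases h : ω ∈ A i <;> simp [hX, Set.indicator_apply, h]
    rw [mgf, hfe,
      integral_add ((integrable_const (exp l - 1)).indicator (hA i)) (integrable_const 1),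
      integral_indicator_const _ (hA i)]
    simp [hp i, smul_eq_mul]
    simp only [measureReal_def]
    ring
  have hprod : ∏ i ∈ W, mgf (X i) μ l ≤
      exp (l * (∑ i ∈ W, p i) + (∑ i ∈ W, p i * (1 - p i)) * (exp l - 1 - l)) := by
    rw [Finset.mul_sum, Finset.sum_mul, ← Finset.sum_add_distrib, exp_sum]
    refine Finset.prod_le_prod (fun i _ => mgf_nonneg) (fun i _ => ?_)
    rw [hmgf_i i]
    exact bern_mgf' (hp01 i).1 (hp01 i).2 hl0.le
  have hg := g_nonneg hl0.le
  have hbg := bernstein_g hl0.le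
  have h1 : V' * (exp l - 1 - l) ≤ l * s / 2 := by
    nlinarith [mul_le_mul_of_nonneg_left hbg hVs.le]
  have h3 : s^2 / (2 * (V' + s/3)) = l * s / 2 := by
    rw [div_eq_iff (mul_pos two_pos hVs).ne']
    linear_combination (-s) * hls
  refine hcher.trans ?_
  rw [hmgfsum]
  calc exp (-l * ((∑ i ∈ W, p i) + s)) * ∏ i ∈ W, mgf (X i) μ l
      ≤ exp (-l * ((∑ i ∈ W, p i) + s)) *
        exp (l * (∑ i ∈ W, p i) + (∑ i ∈ W, p i * (1 - p i)) * (exp l - 1 - l)) :=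
        mul_le_mul_of_nonneg_left hprod (exp_pos _).le
  _ = exp (-(l * s) + (∑ i ∈ W, p i * (1 - p i)) * (exp l - 1 - l)) := by
        rw [← exp_add]; congr 1; ring
  _ ≤ exp (-(l * s) + V' * (exp l - 1 - l)) := by
        apply exp_le_exp.2; nlinarith
  _ ≤ exp (-(s^2 / (2 * (V' + s/3)))) := by
        apply exp_le_exp.2
        rw [h3]
        linarith

private lemma numeric_aux {L A Btk a : ℝ} (hL : 0 < L) (hA : 0 ≤ A) (hB : 0 < Btk)
    (ha : 0 ≤ a) (ha2 : a^2 = 2 * A * L / Btk) :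
    2 * L * A + (8/3) * L * (5/4*a + 4*L/Btk) ≤ (5/4*a + 4*L/Btk)^2 * Btk := by
  have hc : 4 * L / Btk * Btk = 4 * L := by field_simp
  have e1 : a^2 * Btk = 2 * A * L := by
    rw [ha2, div_mul_cancel₀ _ hB.ne']
  have e2 : a * (4 * L / Btk) * Btk = 4 * L * a := by
    rw [mul_assoc, hc]; ring
  have e3 : (4 * L / Btk)^2 * Btk = 4 * L * (4 * L / Btk) := by
    rw [pow_two, mul_assoc, hc]; ring
  have n1 : 0 ≤ L * A := mul_nonneg hL.le hA
  have n2 : 0 ≤ L * a := mul_nonneg hL.le ha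
  have n3 : 0 ≤ L * (4 * L / Btk) := mul_nonneg hL.le (by positivity)
  nlinarith [e1, e2, e3, n1, n2, n3]

set_option maxHeartbeats 1000000

noncomputable def Qminus (γ : ℝ) (F : ℝ → ℝ) : ℝ := sInf {x | γ ≤ F x}

/-- Bias–variance decomposition for the sample quantile under temporal drift
(Theorem 3.1): with `B j` i.i.d. draws from `Q j` (CDF `F j`, continuous) in each period
`j`, all samples independent, and `q̂` the left `(1-α)`-quantile of the empirical CDF of
the samples pooled over the window of the last `k` periods (pooled size `B_{t,k}`),
with probability at least `1 - δ`,
`|F_t(q̂) - (1-α)| ≤ φ(t,k) + (5/4)√(2α(1-α)log(2/δ)/B_{t,k}) + 4 log(2/δ)/B_{t,k}`,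
where `φ(t,k) = max_{t-k+1 ≤ j ≤ t} ‖F j - F t‖_∞`. -/
theorem stmt12 {Ω : Type*} [MeasurableSpace Ω] (μ : Measure Ω) [IsProbabilityMeasure μ]
    (t : ℕ) (ht : 0 < t) (B : Fin t → ℕ) (hB : ∀ j, 0 < B j)
    (U : ((j : Fin t) × Fin (B j)) → Ω → ℝ)
    (hmeas : ∀ p, Measurable (U p))
    (hind : iIndepFun U μ)
    (F : Fin t → ℝ → ℝ)
    (hF : ∀ (j : Fin t) (i : Fin (B j)) (s : ℝ),
      F j s = (μ {ω | U ⟨j, i⟩ ω ≤ s}).toReal)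
    (hcont : ∀ j, Continuous (F j))
    (k : ℕ) (hk1 : 1 ≤ k) (hkt : k ≤ t)
    (α δ : ℝ) (hα : α ∈ Set.Ioo (0 : ℝ) 1) (hδ : δ ∈ Set.Ioo (0 : ℝ) 1)
    (Btk : ℝ)
    (hBtk : Btk = ((Finset.univ.filter
      (fun p : (j : Fin t) × Fin (B j) => t - k ≤ p.1.val)).card : ℝ))
    (φ : ℝ)
    (hφ : φ = ⨆ j : Fin t, ⨆ s : ℝ,
      if t - k ≤ j.val then |F j s - F ⟨t - 1, Nat.sub_lt ht Nat.one_pos⟩ s| else 0) :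
    1 - δ ≤ (μ {ω |
      |F ⟨t - 1, Nat.sub_lt ht Nat.one_pos⟩
          (Qminus (1 - α) (fun s => ((Finset.univ.filter
            (fun p : (j : Fin t) × Fin (B j) =>
              t - k ≤ p.1.val ∧ U p ω ≤ s)).card : ℝ) / Btk))
        - (1 - α)| ≤
      φ + (5 / 4) * Real.sqrt (2 * α * (1 - α) * Real.log (2 / δ) / Btk) +
        4 * Real.log (2 / δ) / Btk}).toReal := by
  classical
  obtain ⟨hα0, hα1⟩ := hα
  obtain ⟨hδ0, hδ1⟩ := hδ
  obtain ⟨jt, hjt⟩ : ∃ jt : Fin t, jt = ⟨t - 1, Nat.sub_lt ht Nat.one_pos⟩ := ⟨_, rfl⟩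
  obtain ⟨W, hW_def⟩ : ∃ W : Finset ((j : Fin t) × Fin (B j)),
    W = Finset.univ.filter (fun p => t - k ≤ p.1.val) := ⟨_, rfl⟩
  rw [← hjt] at hφ ⊢
  rw [← hW_def] at hBtk
  have hjtW : t - k ≤ jt.val := by rw [hjt]; show t - k ≤ t - 1; omega
  have hWmem : ∀ p ∈ W, t - k ≤ p.1.val := fun p hp => by
    rw [hW_def] at hp; exact (Finset.mem_filter.1 hp).2
  have hWne : W.Nonempty := ⟨⟨jt, ⟨0, hB jt⟩⟩, by
    rw [hW_def]; exact Finset.mem_filter.2 ⟨Finset.mem_univ _, hjtW⟩⟩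
  have hBtk0 : 0 < Btk := by
    rw [hBtk]; exact_mod_cast Finset.card_pos.2 hWne
  obtain ⟨L, hL_def⟩ : ∃ L, L = Real.log (2 / δ) := ⟨_, rfl⟩
  rw [← hL_def]
  have hL0 : 0 < L := hL_def ▸ Real.log_pos (by rw [lt_div_iff₀ hδ0]; linarith)
  obtain ⟨a, ha_def⟩ : ∃ a, a = Real.sqrt (2 * α * (1 - α) * L / Btk) := ⟨_, rfl⟩
  rw [← ha_def]
  have ha0 : 0 ≤ a := ha_def ▸ Real.sqrt_nonneg _
  have ha2 : a ^ 2 = 2 * α * (1 - α) * L / Btk := by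
    rw [ha_def]
    exact Real.sq_sqrt (by
      have h1 : (0:ℝ) < 1 - α := by linarith
      positivity)
  obtain ⟨u, hu_def⟩ : ∃ u : ℝ, u = 5 / 4 * a + 4 * L / Btk := ⟨_, rfl⟩
  have hu0 : 0 < u := by
    have h1 : 0 < 4 * L / Btk := by positivity
    rw [hu_def]
    linarith
  -- CDF basic facts
  have hF01 : ∀ (j : Fin t) (x : ℝ), 0 ≤ F j x ∧ F j x ≤ 1 := by
    intro j x
    rw [hF j ⟨0, hB j⟩ x]
    exact ⟨ENNReal.toReal_nonneg,
      by simpa using ENNReal.toReal_mono ENNReal.one_ne_top prob_le_one⟩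
  have hFmono : ∀ j : Fin t, Monotone (F j) := by
    intro j x y hxy
    rw [hF j ⟨0, hB j⟩ x, hF j ⟨0, hB j⟩ y]
    exact ENNReal.toReal_mono (measure_ne_top _ _)
      (measure_mono (fun ω (h : U _ ω ≤ x) => le_trans h hxy))
  have hcdf : ∀ j : Fin t, F j = ProbabilityTheory.cdf (μ.map (U ⟨j, ⟨0, hB j⟩⟩)) := by
    intro j
    haveI := Measure.isProbabilityMeasure_map (μ := μ) (hmeas ⟨j, ⟨0, hB j⟩⟩).aemeasurable
    funext x
    rw [ProbabilityTheory.cdf_eq_real, measureReal_def, Measure.map_apply (hmeas _) measurableSet_Iic,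
      hF j ⟨0, hB j⟩ x]
    rfl
  have hFtop : ∀ j : Fin t, Filter.Tendsto (F j) Filter.atTop (nhds 1) := by
    intro j
    haveI := Measure.isProbabilityMeasure_map (μ := μ) (hmeas ⟨j, ⟨0, hB j⟩⟩).aemeasurable
    rw [hcdf j]; exact ProbabilityTheory.tendsto_cdf_atTop _
  have hFbot : ∀ j : Fin t, Filter.Tendsto (F j) Filter.atBot (nhds 0) := by
    intro j
    haveI := Measure.isProbabilityMeasure_map (μ := μ) (hmeas ⟨j, ⟨0, hB j⟩⟩).aemeasurable
    rw [hcdf j]; exact ProbabilityTheory.tendsto_cdf_atBot _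
  -- pooled mean CDF (times Btk)
  obtain ⟨m, hm_def⟩ : ∃ m : ℝ → ℝ, m = fun x => ∑ p ∈ W, F p.1 x := ⟨_, rfl⟩
  have hm : ∀ x, m x = ∑ p ∈ W, F p.1 x := fun x => by rw [hm_def]
  have hmcont : Continuous m := hm_def ▸ continuous_finset_sum _ (fun p _ => hcont p.1)
  have hmmono : Monotone m := fun x y hxy => by
    rw [hm, hm]; exact Finset.sum_le_sum (fun p _ => hFmono p.1 hxy)
  have hsumconst : ∀ c : ℝ, (∑ _p ∈ W, c) = Btk * c := by
    intro c; rw [Finset.sum_const, hBtk]; simp [mul_comm]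
  have hmtop : Filter.Tendsto m Filter.atTop (nhds Btk) := by
    have h := tendsto_finset_sum W (fun p (_ : p ∈ W) => hFtop p.1)
    rw [show (∑ _p ∈ W, (1:ℝ)) = Btk by rw [hsumconst]; ring] at h
    rw [hm_def]; exact h
  have hmbot : Filter.Tendsto m Filter.atBot (nhds 0) := by
    have h := tendsto_finset_sum W (fun p (_ : p ∈ W) => hFbot p.1)
    rw [show (∑ _p ∈ W, (0:ℝ)) = 0 by simp] at h
    rw [hm_def]; exact h
  -- φ facts
  have hφ_ge : ∀ (j : Fin t), t - k ≤ j.val → ∀ x, |F j x - F jt x| ≤ φ := by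
    intro j hj x
    rw [hφ]
    have hbdd1 : ∀ (j' : Fin t), BddAbove (Set.range
        (fun s => if t - k ≤ j'.val then |F j' s - F jt s| else 0)) := by
      intro j'
      refine ⟨1, ?_⟩
      rintro _ ⟨s, rfl⟩
      dsimp only
      split
      · rw [abs_sub_le_iff]
        constructor <;> linarith [(hF01 j' s).1, (hF01 j' s).2, (hF01 jt s).1, (hF01 jt s).2]
      · norm_num
    calc |F j x - F jt x| = (if t - k ≤ j.val then |F j x - F jt x| else 0) := (if_pos hj).symm
    _ ≤ ⨆ s, (if t - k ≤ j.val then |F j s - F jt s| else 0) := le_ciSup (hbdd1 j) x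
    _ ≤ ⨆ j' : Fin t, ⨆ s, (if t - k ≤ j'.val then |F j' s - F jt s| else 0) :=
        le_ciSup (f := fun j' : Fin t => ⨆ s, (if t - k ≤ j'.val then |F j' s - F jt s| else 0))
          (Set.Finite.bddAbove (Set.finite_range _)) j
  have hφ0 : 0 ≤ φ := by
    have h := hφ_ge jt hjtW 0
    simp only [sub_self, abs_zero] at h
    exact h
  have hmF : ∀ x, |m x - Btk * F jt x| ≤ Btk * φ := by
    intro x
    have he : m x - Btk * F jt x = ∑ p ∈ W, (F p.1 x - F jt x) := by
      rw [Finset.sum_sub_distrib, hsumconst, hm]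
    rw [he]
    calc |∑ p ∈ W, (F p.1 x - F jt x)| ≤ ∑ p ∈ W, |F p.1 x - F jt x| :=
        Finset.abs_sum_le_sum_abs _ _
    _ ≤ ∑ _p ∈ W, φ := Finset.sum_le_sum (fun p hp => hφ_ge p.1 (hWmem p hp) x)
    _ = Btk * φ := hsumconst φ
  -- variance bound (Jensen/Cauchy–Schwarz)
  have hvar : ∀ x, ∑ p ∈ W, F p.1 x * (1 - F p.1 x) ≤ m x - (m x)^2 / Btk := by
    intro x
    have h := sq_sum_le_card_mul_sum_sq (s := W) (f := fun p => F p.1 x)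
    have hcard : (W.card : ℝ) = Btk := by rw [hBtk]
    have h2 : (m x)^2 ≤ Btk * ∑ p ∈ W, (F p.1 x)^2 := by
      rw [← hcard, hm]; exact_mod_cast h
    have h3 : ∑ p ∈ W, F p.1 x * (1 - F p.1 x) = m x - ∑ p ∈ W, (F p.1 x)^2 := by
      rw [hm, ← Finset.sum_sub_distrib]
      exact Finset.sum_congr rfl (fun p _ => by ring)
    rw [h3]
    have h4 : (m x)^2 / Btk ≤ ∑ p ∈ W, (F p.1 x)^2 := by
      rw [div_le_iff₀ hBtk0]
      nlinarith
    linarith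
  -- numeric inequality
  have hnum : 2 * L * (α * (1 - α)) + (8/3) * L * u ≤ u^2 * Btk := by
    rw [hu_def]
    exact numeric_aux hL0 (mul_nonneg hα0.le (by linarith)) hBtk0 ha0 (by rw [ha2]; ring)
  -- tail bound
  have htail : Real.exp (-((u * Btk)^2 / (2 * (Btk * (α * (1 - α) + u) + (u * Btk)/3))))
      ≤ δ / 2 := by
    have hA0 : 0 < α * (1 - α) + u := by
      have h9 := mul_pos hα0 (show (0:ℝ) < 1 - α by linarith)
      linarith
    have hV'0 : 0 < Btk * (α * (1 - α) + u) := mul_pos hBtk0 hA0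
    have hden : 0 < 2 * (Btk * (α * (1 - α) + u) + (u * Btk)/3) := by
      have h9 : 0 < u * Btk := mul_pos hu0 hBtk0
      linarith
    have hexp : L ≤ (u * Btk)^2 / (2 * (Btk * (α * (1 - α) + u) + (u * Btk)/3)) := by
      rw [le_div_iff₀ hden]
      linarith [mul_le_mul_of_nonneg_right hnum hBtk0.le]
    calc Real.exp (-((u * Btk)^2 / (2 * (Btk * (α * (1 - α) + u) + (u * Btk)/3))))
        ≤ Real.exp (-L) := by apply Real.exp_le_exp.2; linarith
    _ = δ / 2 := by
        rw [hL_def, Real.exp_neg, Real.exp_log (by positivity), inv_div]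
  -- empirical counts
  obtain ⟨Sc, hSc_def⟩ : ∃ Sc : ℝ → Ω → ℝ,
      Sc = fun x ω => ∑ p ∈ W, ({ω' | U p ω' ≤ x}).indicator (fun _ => (1:ℝ)) ω := ⟨_, rfl⟩
  have hSc : ∀ x ω, Sc x ω = ∑ p ∈ W, ({ω' | U p ω' ≤ x}).indicator (fun _ => (1:ℝ)) ω := by
    intro x ω; rw [hSc_def]
  have hAmeas : ∀ (p) (x : ℝ), MeasurableSet {ω' | U p ω' ≤ x} := fun p x =>
    measurableSet_le (hmeas p) measurable_const
  have hA'meas : ∀ (p) (x : ℝ), MeasurableSet {ω' | x < U p ω'} := fun p x =>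
    measurableSet_lt measurable_const (hmeas p)
  have hFhat : ∀ ω x, ((Finset.univ.filter
      (fun p : (j : Fin t) × Fin (B j) => t - k ≤ p.1.val ∧ U p ω ≤ x)).card : ℝ) = Sc x ω := by
    intro ω x
    have h1 : Finset.univ.filter
        (fun p : (j : Fin t) × Fin (B j) => t - k ≤ p.1.val ∧ U p ω ≤ x)
        = W.filter (fun p => U p ω ≤ x) := by
      rw [hW_def, Finset.filter_filter]
    rw [h1, hSc, Finset.natCast_card_filter]
    exact Finset.sum_congr rfl fun p _ => by
      by_cases h : U p ω ≤ x <;> simp [Set.indicator_apply, h]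
  have hScmono : ∀ ω, Monotone (fun x => Sc x ω) := by
    intro ω x y hxy
    dsimp only
    rw [hSc, hSc]
    refine Finset.sum_le_sum fun p _ => ?_
    by_cases h : U p ω ≤ x
    · simp [Set.indicator_apply, h, le_trans h hxy]
    · simp only [Set.indicator_apply, Set.mem_setOf_eq, h, if_false]
      split <;> norm_num
  have hScpos : ∀ x ω, 0 < Sc x ω → ∃ p ∈ W, U p ω ≤ x := by
    intro x ω hpos
    by_contra hno
    push_neg at hno
    rw [hSc, Finset.sum_eq_zero (fun p hp => by
      simp [Set.indicator_apply, Set.mem_setOf_eq, not_le.2 (hno p hp)])] at hpos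
    exact lt_irrefl _ hpos
  have hScsup : ∀ ω, Sc (W.sup' hWne fun p => U p ω) ω = Btk := by
    intro ω
    rw [hSc]
    have h1 : ∀ p ∈ W, ({ω' | U p ω' ≤ W.sup' hWne fun q => U q ω}).indicator
        (fun _ => (1:ℝ)) ω = 1 := by
      intro p hp
      have h2 : U p ω ≤ W.sup' hWne fun q => U q ω := Finset.le_sup' (fun q => U q ω) hp
      simp only [Set.indicator_apply, Set.mem_setOf_eq]
      exact if_pos h2
    rw [Finset.sum_congr rfl h1, hsumconst, mul_one]
  -- independence of indicators
  have hindIic : ∀ x : ℝ, iIndepFun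
      (fun p => ({ω' | U p ω' ≤ x}).indicator (fun _ => (1:ℝ))) μ := by
    intro x
    have he : (fun p : (j : Fin t) × Fin (B j) => ({ω' | U p ω' ≤ x}).indicator (fun _ => (1:ℝ)))
        = fun p => ((Set.Iic x).indicator (fun _ => (1:ℝ))) ∘ U p := by
      funext p ω
      simp [Set.indicator_apply, Set.mem_Iic, Function.comp]
    rw [he]
    exact hind.comp _ (fun p => measurable_const.indicator measurableSet_Iic)
  have hindIoi : ∀ x : ℝ, iIndepFun
      (fun p => ({ω' | x < U p ω'}).indicator (fun _ => (1:ℝ))) μ := by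
    intro x
    have he : (fun p : (j : Fin t) × Fin (B j) => ({ω' | x < U p ω'}).indicator (fun _ => (1:ℝ)))
        = fun p => ((Set.Ioi x).indicator (fun _ => (1:ℝ))) ∘ U p := by
      funext p ω
      simp [Set.indicator_apply, Set.mem_Ioi, Function.comp]
    rw [he]
    exact hind.comp _ (fun p => measurable_const.indicator measurableSet_Ioi)
  -- probability identities
  have hprobIic : ∀ (p : (j : Fin t) × Fin (B j)) (x : ℝ),
      F p.1 x = (μ {ω' | U p ω' ≤ x}).toReal := fun p x => hF p.1 p.2 x
  have hprobIoi : ∀ (p : (j : Fin t) × Fin (B j)) (x : ℝ),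
      1 - F p.1 x = (μ {ω' | x < U p ω'}).toReal := by
    intro p x
    have hc : {ω' | x < U p ω'} = {ω' | U p ω' ≤ x}ᶜ := by ext ω'; simp [not_le]
    rw [hc, prob_compl_eq_one_sub (hAmeas p x),
      ENNReal.toReal_sub_of_le prob_le_one ENNReal.one_ne_top, hprobIic p x]
    simp
  have hV'pos : 0 < Btk * (α * (1 - α) + u) := mul_pos hBtk0 (by
    have h9 := mul_pos hα0 (show (0:ℝ) < 1 - α by linarith)
    linarith)
  have hspos : 0 < u * Btk := mul_pos hu0 hBtk0
  -- upper bound claim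
  have main_upper : ∃ Bad : Set Ω, MeasurableSet Bad ∧ (μ Bad).toReal ≤ δ/2 ∧
      ∀ ω, ω ∉ Bad → F jt (Qminus (1-α) (fun s => Sc s ω / Btk)) - (1-α) ≤ φ + u := by
    rcases le_or_gt α u with hcase | hcase
    · refine ⟨∅, MeasurableSet.empty, by simpa using (by positivity : (0:ℝ) ≤ δ/2),
        fun ω _ => ?_⟩
      have h1 := (hF01 jt (Qminus (1-α) (fun s => Sc s ω / Btk))).2
      linarith
    · obtain ⟨x₁, hx1⟩ := (hmtop.eventually_const_lt
        (show (1-α+u)*Btk < Btk by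
          have h9 := mul_pos (show 0 < α - u by linarith) hBtk0
          linarith [h9])).exists
      obtain ⟨x₀, hx0⟩ := (hmbot.eventually_lt_const
        (show (0:ℝ) < (1-α+u)*Btk from mul_pos (by linarith) hBtk0)).exists
      have hm0 : m (min x₀ x₁) ≤ (1-α+u)*Btk := le_trans (hmmono (min_le_left _ _)) hx0.le
      obtain ⟨b, _, hb⟩ := intermediate_value_Icc (min_le_right x₀ x₁) hmcont.continuousOn
        ⟨hm0, hx1.le⟩
      refine ⟨{ω | (∑ p ∈ W, (1 - F p.1 b)) + u*Btk
          ≤ ∑ p ∈ W, ({ω' | b < U p ω'}).indicator (fun _ => (1:ℝ)) ω}, ?_, ?_, ?_⟩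
      · exact measurableSet_le measurable_const
          (Finset.measurable_sum _ fun p _ => measurable_const.indicator (hA'meas p b))
      · refine le_trans (chernoff_bennett μ (fun p => {ω' | b < U p ω'})
          (fun p => hA'meas p b) (hindIoi b) W
          (fun p => 1 - F p.1 b) (fun p => hprobIoi p b)
          (Btk*(α*(1-α)+u)) (u*Btk) ?_ hV'pos hspos) htail
        have h1 : ∑ p ∈ W, (1 - F p.1 b) * (1 - (1 - F p.1 b))
            = ∑ p ∈ W, F p.1 b * (1 - F p.1 b) := Finset.sum_congr rfl fun p _ => by ring
        rw [h1]
        have h2 := hvar b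
        have h3 : m b - (m b)^2/Btk = Btk*((1-α+u)*(α-u)) := by
          rw [hb, mul_pow, pow_two Btk, mul_div_assoc, mul_self_div_self]; ring
        have h4 : Btk*((1-α+u)*(α-u)) ≤ Btk*(α*(1-α)+u) := by
          have f1 : 0 ≤ Btk*(u*(1-α)) :=
            mul_nonneg hBtk0.le (mul_nonneg hu0.le (by linarith))
          have f2 : 0 ≤ Btk*(u*u) := mul_nonneg hBtk0.le (mul_nonneg hu0.le hu0.le)
          linarith [f1, f2]
        linarith
      · intro ω hω
        simp only [Set.mem_setOf_eq, not_le] at hω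
        have hcompl_sum : ∑ p ∈ W, ({ω' | b < U p ω'}).indicator (fun _ => (1:ℝ)) ω
            = Btk - Sc b ω := by
          rw [hSc,
            Finset.sum_congr rfl (fun p (_ : p ∈ W) => show ({ω' | b < U p ω'}).indicator
                (fun _ => (1:ℝ)) ω = 1 - ({ω' | U p ω' ≤ b}).indicator (fun _ => (1:ℝ)) ω by
              by_cases h : U p ω ≤ b
              · have h' : ¬ b < U p ω := not_lt.2 h
                simp [Set.indicator_apply, Set.mem_setOf_eq, h, h']
              · have h' : b < U p ω := lt_of_not_ge h
                simp [Set.indicator_apply, Set.mem_setOf_eq, h, h']),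
            Finset.sum_sub_distrib, hsumconst, mul_one]
        have hsum1 : ∑ p ∈ W, (1 - F p.1 b) = Btk - m b := by
          rw [Finset.sum_sub_distrib, hsumconst, mul_one, hm]
        rw [hcompl_sum, hsum1] at hω
        have hSb : (1-α)*Btk < Sc b ω := by linarith [hω, hb]
        have hbmem : b ∈ {x | 1 - α ≤ Sc x ω / Btk} := by
          rw [Set.mem_setOf_eq, le_div_iff₀ hBtk0]
          linarith
        have hbdd : BddBelow {x | 1 - α ≤ Sc x ω / Btk} := by
          refine ⟨W.inf' hWne (fun p => U p ω), fun y hy => ?_⟩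
          rw [Set.mem_setOf_eq, le_div_iff₀ hBtk0] at hy
          have hpos : 0 < Sc y ω :=
            lt_of_lt_of_le (mul_pos (by linarith) hBtk0) hy
          obtain ⟨p, hpW, hpy⟩ := hScpos y ω hpos
          exact le_trans (Finset.inf'_le _ hpW) hpy
        have hqb : Qminus (1-α) (fun s => Sc s ω / Btk) ≤ b := csInf_le hbdd hbmem
        have hFb : F jt b ≤ (1 - α + u) + φ := by
          have h4 := (abs_le.1 (hmF b)).1
          have h5 : F jt b * Btk ≤ ((1 - α + u) + φ) * Btk := by linarith [h4, hb]
          exact (mul_le_mul_iff_of_pos_right hBtk0).1 h5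
        have h6 := hFmono jt hqb
        linarith
  -- lower bound claim
  have main_lower : ∃ Bad : Set Ω, MeasurableSet Bad ∧ (μ Bad).toReal ≤ δ/2 ∧
      ∀ ω, ω ∉ Bad → (1-α) - F jt (Qminus (1-α) (fun s => Sc s ω / Btk)) ≤ φ + u := by
    rcases le_or_gt (1-α) u with hcase | hcase
    · refine ⟨∅, MeasurableSet.empty, by simpa using (by positivity : (0:ℝ) ≤ δ/2),
        fun ω _ => ?_⟩
      have h1 := (hF01 jt (Qminus (1-α) (fun s => Sc s ω / Btk))).1
      linarith
    · obtain ⟨x₁, hx1⟩ := (hmtop.eventually_const_lt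
        (show (1-α-u)*Btk < Btk by
          have h9 := mul_pos (show 0 < α + u by linarith) hBtk0
          linarith [h9])).exists
      obtain ⟨x₀, hx0⟩ := (hmbot.eventually_lt_const
        (show (0:ℝ) < (1-α-u)*Btk from mul_pos (by linarith) hBtk0)).exists
      have hm0 : m (min x₀ x₁) ≤ (1-α-u)*Btk := le_trans (hmmono (min_le_left _ _)) hx0.le
      obtain ⟨c, _, hc⟩ := intermediate_value_Icc (min_le_right x₀ x₁) hmcont.continuousOn
        ⟨hm0, hx1.le⟩
      refine ⟨{ω | (∑ p ∈ W, F p.1 c) + u*Btk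
          ≤ ∑ p ∈ W, ({ω' | U p ω' ≤ c}).indicator (fun _ => (1:ℝ)) ω}, ?_, ?_, ?_⟩
      · exact measurableSet_le measurable_const
          (Finset.measurable_sum _ fun p _ => measurable_const.indicator (hAmeas p c))
      · refine le_trans (chernoff_bennett μ (fun p => {ω' | U p ω' ≤ c})
          (fun p => hAmeas p c) (hindIic c) W
          (fun p => F p.1 c) (fun p => hprobIic p c)
          (Btk*(α*(1-α)+u)) (u*Btk) ?_ hV'pos hspos) htail
        have h2 := hvar c
        have h3 : m c - (m c)^2/Btk = Btk*((1-α-u)*(α+u)) := by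
          rw [hc, mul_pow, pow_two Btk, mul_div_assoc, mul_self_div_self]; ring
        have h4 : Btk*((1-α-u)*(α+u)) ≤ Btk*(α*(1-α)+u) := by
          have f1 : 0 ≤ Btk*(α*u) := mul_nonneg hBtk0.le (mul_nonneg hα0.le hu0.le)
          have f2 : 0 ≤ Btk*(u*u) := mul_nonneg hBtk0.le (mul_nonneg hu0.le hu0.le)
          linarith [f1, f2]
        linarith
      · intro ω hω
        simp only [Set.mem_setOf_eq, not_le] at hω
        have hsum1 : ∑ p ∈ W, F p.1 c = m c := (hm c).symm
        rw [hsum1, ← hSc] at hω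
        have hSb : Sc c ω < (1-α)*Btk := by linarith [hω, hc]
        have hne : {x | 1 - α ≤ Sc x ω / Btk}.Nonempty := by
          refine ⟨W.sup' hWne (fun p => U p ω), ?_⟩
          rw [Set.mem_setOf_eq, le_div_iff₀ hBtk0, hScsup ω]
          have h9 := mul_pos hα0 hBtk0
          linarith
        have hlb : ∀ y ∈ {x | 1 - α ≤ Sc x ω / Btk}, c ≤ y := by
          intro y hy
          rw [Set.mem_setOf_eq, le_div_iff₀ hBtk0] at hy
          by_contra hyc
          push_neg at hyc
          have := hScmono ω hyc.le
          simp only at this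
          linarith
        have hqc : c ≤ Qminus (1-α) (fun s => Sc s ω / Btk) := le_csInf hne hlb
        have hFc : (1 - α - u) - φ ≤ F jt c := by
          have h4 := (abs_le.1 (hmF c)).2
          have h5 : ((1 - α - u) - φ) * Btk ≤ F jt c * Btk := by linarith [h4, hc]
          exact (mul_le_mul_iff_of_pos_right hBtk0).1 h5
        have h6 := hFmono jt hqc
        linarith
  -- assemble
  obtain ⟨Bad1, hBad1m, hBad1, hgood1⟩ := main_upper
  obtain ⟨Bad2, hBad2m, hBad2, hgood2⟩ := main_lower
  have hsub : (Bad1 ∪ Bad2)ᶜ ⊆ {ω |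
      |F jt (Qminus (1 - α) (fun s => ((Finset.univ.filter
            (fun p : (j : Fin t) × Fin (B j) =>
              t - k ≤ p.1.val ∧ U p ω ≤ s)).card : ℝ) / Btk)) - (1 - α)| ≤
      φ + (5 / 4) * a + 4 * L / Btk} := by
    intro ω hω
    rw [Set.mem_compl_iff, Set.mem_union, not_or] at hω
    obtain ⟨h1, h2⟩ := hω
    have hfun : (fun s => ((Finset.univ.filter
        (fun p : (j : Fin t) × Fin (B j) =>
          t - k ≤ p.1.val ∧ U p ω ≤ s)).card : ℝ) / Btk)
        = fun s => Sc s ω / Btk := by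
      funext s; rw [hFhat ω s]
    rw [Set.mem_setOf_eq, hfun]
    have hg1 := hgood1 ω h1
    have hg2 := hgood2 ω h2
    have habs : |F jt (Qminus (1-α) (fun s => Sc s ω / Btk)) - (1-α)| ≤ φ + u :=
      abs_le.2 ⟨by linarith, hg1⟩
    calc |F jt (Qminus (1-α) (fun s => Sc s ω / Btk)) - (1-α)| ≤ φ + u := habs
    _ = φ + (5 / 4) * a + 4 * L / Btk := by rw [hu_def]; ring
  have hb1 : μ Bad1 ≤ ENNReal.ofReal (δ/2) :=
    (ENNReal.le_ofReal_iff_toReal_le (measure_ne_top _ _) (by positivity)).2 hBad1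
  have hb2 : μ Bad2 ≤ ENNReal.ofReal (δ/2) :=
    (ENNReal.le_ofReal_iff_toReal_le (measure_ne_top _ _) (by positivity)).2 hBad2
  have hunion : μ (Bad1 ∪ Bad2) ≤ ENNReal.ofReal δ := by
    refine (measure_union_le _ _).trans ?_
    calc μ Bad1 + μ Bad2 ≤ ENNReal.ofReal (δ/2) + ENNReal.ofReal (δ/2) := add_le_add hb1 hb2
    _ = ENNReal.ofReal δ := by
        rw [← ENNReal.ofReal_add (by positivity) (by positivity)]
        norm_num
  have hcompl : μ ((Bad1 ∪ Bad2)ᶜ) = 1 - μ (Bad1 ∪ Bad2) :=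
    prob_compl_eq_one_sub (hBad1m.union hBad2m)
  have hutoReal : (μ (Bad1 ∪ Bad2)).toReal ≤ δ :=
    ENNReal.toReal_le_of_le_ofReal hδ0.le hunion
  have hcomplReal : 1 - δ ≤ (μ ((Bad1 ∪ Bad2)ᶜ)).toReal := by
    rw [hcompl, ENNReal.toReal_sub_of_le prob_le_one ENNReal.one_ne_top]
    simp only [ENNReal.toReal_one]
    linarith
  refine hcomplReal.trans (ENNReal.toReal_mono (measure_ne_top _ _) (measure_mono hsub))
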